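/- arXiv:2007.08023 — 2 statements merged into one kernel-verified Lean document; each statement's English description precedes it below -/
import Mathlib

section
/- The spectral radius of the (q,3)-path-block P₃^q is the unique root on (q, ∞) of the polynomial f_q(x) = (x−q)·((x−q)(x+2)+1) − 2q. -/
open scoped Classical
open Polynomial

noncomputable section

/-- Adjacency matrix of a simple graph, over `ℝ`. -/
def adjM {V : Type*} [Fintype V] (G : SimpleGraph V) : Matrix V V ℝ :=
  fun a b => if G.Adj a b then 1 else 0

/-- Characteristic polynomial `det (x•I - A(G))` of the adjacency matrix. -/
def charP {V : Type*} [Fintype V] [DecidableEq V] (G : SimpleGraph V) : Polynomial ℝ :=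
  (adjM G).charpoly

/-- Spectral radius: the largest real eigenvalue of the (symmetric, nonnegative)
adjacency matrix, i.e. the largest real root of the characteristic polynomial. -/
def specRad {V : Type*} [Fintype V] [DecidableEq V] (G : SimpleGraph V) : ℝ :=
  sSup {x : ℝ | (charP G).IsRoot x}

/-- The `(q,b)`-path-block: `b` copies of `K_{q+1}` arranged in a path, consecutive
blocks sharing exactly one vertex. Block `k` (for `k < b`) consists of the vertices
in the interval `[k*q, (k+1)*q]` of `Fin (b*q+1)`. -/
def pathBlock (q b : ℕ) : SimpleGraph (Fin (b * q + 1)) where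
  Adj i j := i ≠ j ∧ ∃ k < b, k * q ≤ (i : ℕ) ∧ (i : ℕ) ≤ (k + 1) * q ∧
      k * q ≤ (j : ℕ) ∧ (j : ℕ) ≤ (k + 1) * q
  symm := by
    constructor
    rintro i j ⟨hne, k, hk, h1, h2, h3, h4⟩
    exact ⟨hne.symm, k, hk, h3, h4, h1, h2⟩
  loopless := ⟨fun i h => h.1 rfl⟩

namespace PBaux

lemma eval_charpoly' {n : Type*} [Fintype n] [DecidableEq n] (M : Matrix n n ℝ) (x : ℝ) :
    M.charpoly.eval x = (x • (1 : Matrix n n ℝ) - M).det := by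
  rw [Matrix.charpoly, ← Polynomial.coe_evalRingHom, RingHom.map_det]
  congr 1
  ext i j
  by_cases h : i = j
  · subst h
    simp [Matrix.charmatrix_apply_eq, Matrix.one_apply, Matrix.smul_apply, Matrix.sub_apply]
  · simp [Matrix.charmatrix_apply_ne _ _ _ h, Matrix.one_apply, h, Matrix.smul_apply,
      Matrix.sub_apply]

lemma isRoot_charP_iff {n : Type*} [Fintype n] [DecidableEq n] (G : SimpleGraph n) (x : ℝ) :
    (charP G).IsRoot x ↔ ∃ v : n → ℝ, v ≠ 0 ∧ (adjM G).mulVec v = x • v := by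
  rw [_root_.charP, Polynomial.IsRoot, eval_charpoly', ← Matrix.exists_mulVec_eq_zero_iff]
  constructor
  · rintro ⟨v, hv, h⟩
    refine ⟨v, hv, ?_⟩
    rw [Matrix.sub_mulVec, Matrix.smul_mulVec, Matrix.one_mulVec] at h
    exact (sub_eq_zero.mp h).symm
  · rintro ⟨v, hv, h⟩
    refine ⟨v, hv, ?_⟩
    rw [Matrix.sub_mulVec, Matrix.smul_mulVec, Matrix.one_mulVec, h, sub_self]

variable {q : ℕ}

/-- Uniform characterization of neighborhoods in `pathBlock q 3` as intervals. -/
lemma adj_char (hq : 2 ≤ q) (i : Fin (3*q+1)) (lo hi : ℕ)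
    (h : (i.val < q ∧ lo = 0 ∧ hi = q) ∨ (i.val = q ∧ lo = 0 ∧ hi = 2*q) ∨
      (q < i.val ∧ i.val < 2*q ∧ lo = q ∧ hi = 2*q) ∨ (i.val = 2*q ∧ lo = q ∧ hi = 3*q) ∨
      (2*q < i.val ∧ lo = 2*q ∧ hi = 3*q)) (j : Fin (3*q+1)) :
    (pathBlock q 3).Adj i j ↔ (j ≠ i ∧ lo ≤ j.val ∧ j.val ≤ hi) := by
  have hjlt : j.val < 3*q+1 := j.isLt
  have hilt : i.val < 3*q+1 := i.isLt
  constructor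
  · rintro ⟨hne, k, hk, h1, h2, h3, h4⟩
    refine ⟨hne.symm, ?_⟩
    rcases h with ⟨hc, hl, hh⟩ | ⟨hc, hl, hh⟩ | ⟨hc1, hc2, hl, hh⟩ | ⟨hc, hl, hh⟩ |
      ⟨hc, hl, hh⟩ <;> interval_cases k <;> omega
  · rintro ⟨hne, hlo, hhi⟩
    refine ⟨hne.symm, ?_⟩
    rcases h with ⟨hc, hl, hh⟩ | ⟨hc, hl, hh⟩ | ⟨hc1, hc2, hl, hh⟩ | ⟨hc, hl, hh⟩ |
      ⟨hc, hl, hh⟩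
    · exact ⟨0, by norm_num, by omega, by omega, by omega, by omega⟩
    · by_cases hj : j.val ≤ q
      · exact ⟨0, by norm_num, by omega, by omega, by omega, by omega⟩
      · exact ⟨1, by norm_num, by omega, by omega, by omega, by omega⟩
    · exact ⟨1, by norm_num, by omega, by omega, by omega, by omega⟩
    · by_cases hj : j.val ≤ 2*q
      · exact ⟨1, by norm_num, by omega, by omega, by omega, by omega⟩
      · exact ⟨2, by norm_num, by omega, by omega, by omega, by omega⟩
    · exact ⟨2, by norm_num, by omega, by omega, by omega, by omega⟩

/-- Interval sums of a vector. -/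
def T (v : Fin (3*q+1) → ℝ) (lo hi : ℕ) : ℝ :=
  ∑ j : Fin (3*q+1), if lo ≤ j.val ∧ j.val ≤ hi then v j else 0

lemma sum_count (hq3 : ℕ) (P : ℕ → Prop) [DecidablePred P] (a : ℝ) :
    (∑ j : Fin hq3, if P j.val then a else 0) =
      (((Finset.range hq3).filter P).card : ℝ) * a := by
  rw [Fin.sum_univ_eq_sum_range (fun m => if P m then a else 0), ← Finset.sum_filter,
    Finset.sum_const, nsmul_eq_mul]

/-- The mulVec entry at a vertex `i` with neighborhood `[lo,hi] \ {i}`. -/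
lemma mulVec_entry (hq : 2 ≤ q) (v : Fin (3*q+1) → ℝ) (i : Fin (3*q+1)) (lo hi : ℕ)
    (h : ∀ j, (pathBlock q 3).Adj i j ↔ (j ≠ i ∧ lo ≤ j.val ∧ j.val ≤ hi))
    (hi' : lo ≤ i.val ∧ i.val ≤ hi) :
    (adjM (pathBlock q 3)).mulVec v i = T v lo hi - v i := by
  unfold Matrix.mulVec dotProduct adjM T
  have : ∀ j : Fin (3*q+1),
      (if (pathBlock q 3).Adj i j then (1:ℝ) else 0) * v j =
        (if lo ≤ j.val ∧ j.val ≤ hi then v j else 0) - (if j = i then v j else 0) := by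
    intro j
    by_cases hji : j = i
    · subst hji
      simp [SimpleGraph.irrefl, hi']
    · by_cases hj : lo ≤ j.val ∧ j.val ≤ hi
      · rw [if_pos ((h j).mpr ⟨hji, hj⟩)]
        simp [hj, hji]
      · rw [if_neg (fun hadj => hj ((h j).mp hadj).2)]
        simp [hj, hji]
  rw [Finset.sum_congr rfl (fun j _ => this j), Finset.sum_sub_distrib,
    Finset.sum_ite_eq' Finset.univ i v]
  simp

lemma sum_indicator_val {n : ℕ} (k : ℕ) (hk : k < n) (v : Fin n → ℝ) :
    (∑ j : Fin n, if j.val = k then v j else 0) = v ⟨k, hk⟩ := by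
  rw [Finset.sum_eq_single (⟨k, hk⟩ : Fin n)]
  · simp
  · intro b _ hb
    exact if_neg (fun h => hb (Fin.ext h))
  · simp

lemma T_low_eval (hq : 2 ≤ q) (v : Fin (3*q+1) → ℝ) (a : ℝ)
    (hlow : ∀ j : Fin (3*q+1), j.val < q → v j = a) :
    T v 0 q = (q:ℝ) * a + v ⟨q, by omega⟩ := by
  unfold T
  have hpt : ∀ j : Fin (3*q+1), (if 0 ≤ j.val ∧ j.val ≤ q then v j else 0)
      = (if j.val < q then a else 0) + (if j.val = q then v j else 0) := by
    intro j
    split_ifs <;> first | omega | (rw [hlow j (by omega)]; ring) | ring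
  rw [Finset.sum_congr rfl (fun j _ => hpt j), Finset.sum_add_distrib,
    sum_count (3*q+1) (fun m => m < q) a, sum_indicator_val q (by omega) v,
    show (Finset.range (3*q+1)).filter (fun m => m < q) = Finset.range q by
      ext m; simp only [Finset.mem_filter, Finset.mem_range]; omega,
    Finset.card_range]

lemma T_mid_eval (hq : 2 ≤ q) (v : Fin (3*q+1) → ℝ) (c : ℝ)
    (hmid : ∀ j : Fin (3*q+1), q < j.val → j.val < 2*q → v j = c) :
    T v q (2*q) = v ⟨q, by omega⟩ + ((q:ℝ) - 1) * c + v ⟨2*q, by omega⟩ := by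
  unfold T
  have hpt : ∀ j : Fin (3*q+1), (if q ≤ j.val ∧ j.val ≤ 2*q then v j else 0)
      = (if j.val = q then v j else 0) + (if q < j.val ∧ j.val < 2*q then c else 0)
        + (if j.val = 2*q then v j else 0) := by
    intro j
    split_ifs <;> first | omega | (rw [hmid j (by omega) (by omega)]; ring) | ring
  rw [Finset.sum_congr rfl (fun j _ => hpt j), Finset.sum_add_distrib, Finset.sum_add_distrib,
    sum_count (3*q+1) (fun m => q < m ∧ m < 2*q) c, sum_indicator_val q (by omega) v,
    sum_indicator_val (2*q) (by omega) v,
    show (Finset.range (3*q+1)).filter (fun m => q < m ∧ m < 2*q) = Finset.Ico (q+1) (2*q) by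
      ext m; simp only [Finset.mem_filter, Finset.mem_range, Finset.mem_Ico]; omega,
    Nat.card_Ico, show 2*q - (q+1) = q - 1 by omega, Nat.cast_sub (by omega)]
  norm_num

lemma T_high_eval (hq : 2 ≤ q) (v : Fin (3*q+1) → ℝ) (a : ℝ)
    (hhigh : ∀ j : Fin (3*q+1), 2*q < j.val → v j = a) :
    T v (2*q) (3*q) = v ⟨2*q, by omega⟩ + (q:ℝ) * a := by
  unfold T
  have hpt : ∀ j : Fin (3*q+1), (if 2*q ≤ j.val ∧ j.val ≤ 3*q then v j else 0)
      = (if j.val = 2*q then v j else 0) + (if 2*q < j.val then a else 0) := by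
    intro j
    have hj := j.isLt
    split_ifs <;> first | omega | (rw [hhigh j (by omega)]; ring) | ring
  rw [Finset.sum_congr rfl (fun j _ => hpt j), Finset.sum_add_distrib,
    sum_count (3*q+1) (fun m => 2*q < m) a, sum_indicator_val (2*q) (by omega) v,
    show (Finset.range (3*q+1)).filter (fun m => 2*q < m) = Finset.Ico (2*q+1) (3*q+1) by
      ext m; simp only [Finset.mem_filter, Finset.mem_range, Finset.mem_Ico]; omega,
    Nat.card_Ico, show 3*q+1 - (2*q+1) = q by omega]

lemma T_cut1 (hq : 2 ≤ q) (v : Fin (3*q+1) → ℝ) :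
    T v 0 (2*q) = T v 0 q + T v q (2*q) - v ⟨q, by omega⟩ := by
  unfold T
  have hpt : ∀ j : Fin (3*q+1), (if 0 ≤ j.val ∧ j.val ≤ 2*q then v j else 0)
      = (if 0 ≤ j.val ∧ j.val ≤ q then v j else 0) + (if q ≤ j.val ∧ j.val ≤ 2*q then v j else 0)
        - (if j.val = q then v j else 0) := by
    intro j
    split_ifs <;> first | omega | ring
  rw [Finset.sum_congr rfl (fun j _ => hpt j), Finset.sum_sub_distrib, Finset.sum_add_distrib,
    sum_indicator_val q (by omega) v]

lemma T_cut2 (hq : 2 ≤ q) (v : Fin (3*q+1) → ℝ) :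
    T v q (3*q) = T v q (2*q) + T v (2*q) (3*q) - v ⟨2*q, by omega⟩ := by
  unfold T
  have hpt : ∀ j : Fin (3*q+1), (if q ≤ j.val ∧ j.val ≤ 3*q then v j else 0)
      = (if q ≤ j.val ∧ j.val ≤ 2*q then v j else 0)
        + (if 2*q ≤ j.val ∧ j.val ≤ 3*q then v j else 0)
        - (if j.val = 2*q then v j else 0) := by
    intro j
    split_ifs <;> first | omega | ring
  rw [Finset.sum_congr rfl (fun j _ => hpt j), Finset.sum_sub_distrib, Finset.sum_add_distrib,
    sum_indicator_val (2*q) (by omega) v]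

lemma key_alg (qr x a b1 c b2 a' : ℝ) (hq2 : 2 ≤ qr) (hx : qr < x)
    (e1 : (x+1)*a = qr*a + b1)
    (e3 : (x+1)*c = b1 + (qr-1)*c + b2)
    (e5 : (x+1)*a' = qr*a' + b2)
    (e2 : x*b1 = (qr*a + b1) + (b1 + (qr-1)*c + b2) - b1 - b1)
    (e4 : x*b2 = (b1 + (qr-1)*c + b2) + (b2 + qr*a') - b2 - b2)
    (hnz : ¬(a = 0 ∧ b1 = 0 ∧ c = 0 ∧ b2 = 0 ∧ a' = 0)) :
    (x - qr)*((x - qr)*(x+2)+1) - 2*qr = 0 := by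
  have hd1 : (0:ℝ) < x - qr + 1 := by linarith
  have hd2 : (0:ℝ) < x - qr + 2 := by linarith
  have hb1 : b1 = (x - qr + 1) * a := by linear_combination -e1
  have hb2 : b2 = (x - qr + 1) * a' := by linear_combination -e5
  subst hb1
  subst hb2
  have key : (a - a') * ((x+1)*(x - qr + 1) - qr) = 0 := by linear_combination e2 - e4
  have haa : a = a' := by
    rcases mul_eq_zero.mp key with h | h
    · linarith
    · exfalso
      nlinarith [mul_pos (show (0:ℝ) < x + 1 by linarith) (show (0:ℝ) < x - qr by linarith)]
  subst haa
  have hc : (x - qr + 2) * c = 2*(x - qr + 1)*a := by linear_combination e3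
  have ha : a ≠ 0 := by
    intro h0
    apply hnz
    refine ⟨h0, by rw [h0]; ring, ?_, by rw [h0]; ring, h0⟩
    have : (x - qr + 2) * c = 0 := by rw [hc, h0]; ring
    exact (mul_eq_zero.mp this).resolve_left (ne_of_gt hd2)
  have H : ((x - qr)*((x - qr)*(x+2)+1) - 2*qr) * a = 0 := by
    linear_combination (x - qr + 2)*e2 + (qr - 1)*hc
  exact (mul_eq_zero.mp H).resolve_right ha

lemma forward_dir (hq : 2 ≤ q) {x : ℝ} (hx : (q:ℝ) < x)
    (hroot : (charP (pathBlock q 3)).IsRoot x) :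
    (x - q) * ((x - q)*(x+2)+1) - 2*q = 0 := by
  obtain ⟨v, hv0, heig⟩ := (isRoot_charP_iff (pathBlock q 3) x).mp hroot
  have hq2 : (2:ℝ) ≤ (q:ℝ) := by exact_mod_cast hq
  have hx1 : (0:ℝ) < x + 1 := by linarith
  have hent : ∀ i, (adjM (pathBlock q 3)).mulVec v i = x * v i := by
    intro i; rw [heig]; simp
  -- constancy on classes
  have hlowT : ∀ i : Fin (3*q+1), i.val < q → (x+1) * v i = T v 0 q := by
    intro i hi
    have h1 := mulVec_entry hq v i 0 q
      (adj_char hq i 0 q (Or.inl ⟨hi, rfl, rfl⟩)) ⟨by omega, by omega⟩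
    have h2 := hent i
    rw [h1] at h2
    linarith
  have hmidT : ∀ i : Fin (3*q+1), q < i.val → i.val < 2*q → (x+1) * v i = T v q (2*q) := by
    intro i hi1 hi2
    have h1 := mulVec_entry hq v i q (2*q)
      (adj_char hq i q (2*q) (Or.inr (Or.inr (Or.inl ⟨hi1, hi2, rfl, rfl⟩)))) ⟨by omega, by omega⟩
    have h2 := hent i
    rw [h1] at h2
    linarith
  have hhighT : ∀ i : Fin (3*q+1), 2*q < i.val → (x+1) * v i = T v (2*q) (3*q) := by
    intro i hi
    have hlt := i.isLt
    have h1 := mulVec_entry hq v i (2*q) (3*q)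
      (adj_char hq i (2*q) (3*q) (Or.inr (Or.inr (Or.inr (Or.inr ⟨hi, rfl, rfl⟩)))))
      ⟨by omega, by omega⟩
    have h2 := hent i
    rw [h1] at h2
    linarith
  set a : ℝ := v ⟨0, by omega⟩ with ha_def
  set c : ℝ := v ⟨q+1, by omega⟩ with hc_def
  set a' : ℝ := v ⟨3*q, by omega⟩ with ha'_def
  set b1 : ℝ := v ⟨q, by omega⟩ with hb1_def
  set b2 : ℝ := v ⟨2*q, by omega⟩ with hb2_def
  have hlow : ∀ j : Fin (3*q+1), j.val < q → v j = a := by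
    intro j hj
    have h1 := hlowT j hj
    have h2 := hlowT ⟨0, by omega⟩ (show 0 < q by omega)
    exact mul_left_cancel₀ (ne_of_gt hx1) (h1.trans h2.symm)
  have hmid : ∀ j : Fin (3*q+1), q < j.val → j.val < 2*q → v j = c := by
    intro j hj1 hj2
    have h1 := hmidT j hj1 hj2
    have h2 := hmidT ⟨q+1, by omega⟩ (show q < q+1 by omega) (show q+1 < 2*q by omega)
    exact mul_left_cancel₀ (ne_of_gt hx1) (h1.trans h2.symm)
  have hhigh : ∀ j : Fin (3*q+1), 2*q < j.val → v j = a' := by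
    intro j hj
    have h1 := hhighT j hj
    have h2 := hhighT ⟨3*q, by omega⟩ (show 2*q < 3*q by omega)
    exact mul_left_cancel₀ (ne_of_gt hx1) (h1.trans h2.symm)
  have hT0 : T v 0 q = (q:ℝ)*a + b1 := T_low_eval hq v a hlow
  have hT1 : T v q (2*q) = b1 + ((q:ℝ)-1)*c + b2 := T_mid_eval hq v c hmid
  have hT2 : T v (2*q) (3*q) = b2 + (q:ℝ)*a' := T_high_eval hq v a' hhigh
  -- five equations
  have e1 : (x+1)*a = (q:ℝ)*a + b1 := by
    rw [← hT0]; exact hlowT ⟨0, by omega⟩ (show 0 < q by omega)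
  have e3 : (x+1)*c = b1 + ((q:ℝ)-1)*c + b2 := by
    rw [← hT1]; exact hmidT ⟨q+1, by omega⟩ (show q < q+1 by omega) (show q+1 < 2*q by omega)
  have e5 : (x+1)*a' = (q:ℝ)*a' + b2 := by
    have h2 := hhighT ⟨3*q, by omega⟩ (show 2*q < 3*q by omega)
    rw [hT2] at h2
    rw [show v ⟨3*q, by omega⟩ = a' from rfl] at h2
    linarith
  have e2 : x*b1 = ((q:ℝ)*a + b1) + (b1 + ((q:ℝ)-1)*c + b2) - b1 - b1 := by
    have h1 := mulVec_entry hq v ⟨q, by omega⟩ 0 (2*q)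
      (adj_char hq ⟨q, by omega⟩ 0 (2*q) (Or.inr (Or.inl ⟨rfl, rfl, rfl⟩)))
      (show 0 ≤ q ∧ q ≤ 2*q by omega)
    have h2 := hent ⟨q, by omega⟩
    rw [h1, T_cut1 hq v, hT0, hT1] at h2
    linarith [h2]
  have e4 : x*b2 = (b1 + ((q:ℝ)-1)*c + b2) + (b2 + (q:ℝ)*a') - b2 - b2 := by
    have h1 := mulVec_entry hq v ⟨2*q, by omega⟩ q (3*q)
      (adj_char hq ⟨2*q, by omega⟩ q (3*q) (Or.inr (Or.inr (Or.inr (Or.inl ⟨rfl, rfl, rfl⟩)))))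
      (show q ≤ 2*q ∧ 2*q ≤ 3*q by omega)
    have h2 := hent ⟨2*q, by omega⟩
    rw [h1, T_cut2 hq v, hT1, hT2] at h2
    linarith [h2]
  have hnz : ¬(a = 0 ∧ b1 = 0 ∧ c = 0 ∧ b2 = 0 ∧ a' = 0) := by
    rintro ⟨za, zb1, zc, zb2, za'⟩
    apply hv0
    funext i
    have hlt := i.isLt
    rcases (show i.val < q ∨ i.val = q ∨ (q < i.val ∧ i.val < 2*q) ∨ i.val = 2*q ∨ 2*q < i.val
      from by omega) with h | h | ⟨h1, h2⟩ | h | h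
    · rw [hlow i h]; exact za
    · have : i = ⟨q, by omega⟩ := Fin.ext h
      rw [this]; exact zb1
    · rw [hmid i h1 h2]; exact zc
    · have : i = ⟨2*q, by omega⟩ := Fin.ext h
      rw [this]; exact zb2
    · rw [hhigh i h]; exact za'
  exact key_alg (q:ℝ) x a b1 c b2 a' hq2 hx e1 e3 e5 e2 e4 hnz

lemma backward_dir (hq : 2 ≤ q) {r : ℝ} (hr : (q:ℝ) < r)
    (hf : (r - q) * ((r - q)*(r+2)+1) - 2*q = 0) :
    (charP (pathBlock q 3)).IsRoot r := by
  rw [isRoot_charP_iff]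
  have hq2 : (2:ℝ) ≤ (q:ℝ) := by exact_mod_cast hq
  have hd1 : (0:ℝ) < r - q + 1 := by linarith
  have hd2 : (0:ℝ) < r - q + 2 := by linarith
  set a : ℝ := 1/(r - (q:ℝ) + 1) with ha_def
  set c : ℝ := 2/(r - (q:ℝ) + 2) with hc_def
  set w : Fin (3*q+1) → ℝ := fun j =>
    if j.val = q ∨ j.val = 2*q then 1 else if j.val < q ∨ 2*q < j.val then a else c with hw
  have hlow : ∀ j : Fin (3*q+1), j.val < q → w j = a := by
    intro j hj
    simp only [hw]
    rw [if_neg (by omega), if_pos (Or.inl hj)]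
  have hmid : ∀ j : Fin (3*q+1), q < j.val → j.val < 2*q → w j = c := by
    intro j hj1 hj2
    simp only [hw]
    rw [if_neg (by omega), if_neg (by omega)]
  have hhigh : ∀ j : Fin (3*q+1), 2*q < j.val → w j = a := by
    intro j hj
    simp only [hw]
    rw [if_neg (by omega), if_pos (Or.inr hj)]
  have hb1 : w ⟨q, by omega⟩ = 1 := by simp [hw]
  have hb2 : w ⟨2*q, by omega⟩ = 1 := by simp [hw]
  have ha : a * (r - (q:ℝ) + 1) = 1 := by
    rw [ha_def]; field_simp
  have hc : c * (r - (q:ℝ) + 2) = 2 := by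
    rw [hc_def]; field_simp
  refine ⟨w, ?_, ?_⟩
  · intro h0
    have h1 : w ⟨q, by omega⟩ = 0 := by rw [h0]; rfl
    rw [hb1] at h1
    exact one_ne_zero h1
  · have hT0 : T w 0 q = (q:ℝ)*a + 1 := by rw [T_low_eval hq w a hlow, hb1]
    have hT1 : T w q (2*q) = 1 + ((q:ℝ)-1)*c + 1 := by rw [T_mid_eval hq w c hmid, hb1, hb2]
    have hT2 : T w (2*q) (3*q) = 1 + (q:ℝ)*a := by rw [T_high_eval hq w a hhigh, hb2]
    funext i
    have hlt := i.isLt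
    have hsmul : (r • w) i = r * w i := rfl
    rcases (show i.val < q ∨ i.val = q ∨ (q < i.val ∧ i.val < 2*q) ∨ i.val = 2*q ∨ 2*q < i.val
      from by omega) with h | h | ⟨h1, h2⟩ | h | h
    · rw [mulVec_entry hq w i 0 q (adj_char hq i 0 q (Or.inl ⟨h, rfl, rfl⟩))
        ⟨by omega, by omega⟩, hT0, hsmul, hlow i h]
      linear_combination -ha
    · have hi : i = ⟨q, by omega⟩ := Fin.ext h
      rw [mulVec_entry hq w i 0 (2*q) (adj_char hq i 0 (2*q) (Or.inr (Or.inl ⟨h, rfl, rfl⟩)))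
        ⟨by omega, by omega⟩, T_cut1 hq w, hT0, hT1, hsmul, hi, hb1]
      -- goal: q*a + 1 + (1 + (q-1)*c + 1) - 1 - 1 = r * 1
      have key : ((q:ℝ)*a + (q-1)*c + 1 - r) * ((r - q + 1) * (r - q + 2)) = 0 := by
        have e1 : (q:ℝ)*a*((r-q+1)*(r-q+2)) = q*(r-q+2) := by
          linear_combination ((q:ℝ)*(r-q+2))*ha
        have e2 : ((q:ℝ)-1)*c*((r-q+1)*(r-q+2)) = 2*((q:ℝ)-1)*(r-q+1) := by
          linear_combination (((q:ℝ)-1)*(r-q+1))*hc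
        linear_combination e1 + e2 - hf
      have hne : ((r - (q:ℝ) + 1) * (r - q + 2)) ≠ 0 := by positivity
      have := (mul_eq_zero.mp key).resolve_right hne
      linarith [this]
    · rw [mulVec_entry hq w i q (2*q)
        (adj_char hq i q (2*q) (Or.inr (Or.inr (Or.inl ⟨h1, h2, rfl, rfl⟩))))
        ⟨by omega, by omega⟩, hT1, hsmul, hmid i h1 h2]
      linear_combination -hc
    · have hi : i = ⟨2*q, by omega⟩ := Fin.ext h
      rw [mulVec_entry hq w i q (3*q)
        (adj_char hq i q (3*q) (Or.inr (Or.inr (Or.inr (Or.inl ⟨h, rfl, rfl⟩)))))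
        ⟨by omega, by omega⟩, T_cut2 hq w, hT1, hT2, hsmul, hi, hb2]
      have key : ((q:ℝ)*a + (q-1)*c + 1 - r) * ((r - q + 1) * (r - q + 2)) = 0 := by
        have e1 : (q:ℝ)*a*((r-q+1)*(r-q+2)) = q*(r-q+2) := by
          linear_combination ((q:ℝ)*(r-q+2))*ha
        have e2 : ((q:ℝ)-1)*c*((r-q+1)*(r-q+2)) = 2*((q:ℝ)-1)*(r-q+1) := by
          linear_combination (((q:ℝ)-1)*(r-q+1))*hc
        linear_combination e1 + e2 - hf
      have hne : ((r - (q:ℝ) + 1) * (r - q + 2)) ≠ 0 := by positivity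
      have := (mul_eq_zero.mp key).resolve_right hne
      linarith [this]
    · rw [mulVec_entry hq w i (2*q) (3*q)
        (adj_char hq i (2*q) (3*q) (Or.inr (Or.inr (Or.inr (Or.inr ⟨h, rfl, rfl⟩)))))
        ⟨by omega, by omega⟩, hT2, hsmul, hhigh i h]
      linear_combination -ha

end PBaux

/-- The spectral radius of the `(q,3)`-path-block is the unique root on `(q, ∞)` of
`f_q(x) = (x-q)((x-q)(x+2)+1) - 2q`. -/
theorem specRad_pathBlock_three (q : ℕ) (hq : 2 ≤ q) :
    (q : ℝ) < specRad (pathBlock q 3) ∧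
    (specRad (pathBlock q 3) - q) *
        ((specRad (pathBlock q 3) - q) * (specRad (pathBlock q 3) + 2) + 1) - 2 * q = 0 ∧
    ∀ x : ℝ, (q : ℝ) < x → (x - q) * ((x - q) * (x + 2) + 1) - 2 * q = 0 →
      x = specRad (pathBlock q 3) := by
  have hq2 : (2:ℝ) ≤ (q:ℝ) := by exact_mod_cast hq
  set g : ℝ → ℝ := fun x => (x - q) * ((x - q) * (x + 2) + 1) - 2 * q with hg
  have hcont : ContinuousOn g (Set.Icc (q:ℝ) ((q:ℝ)+3)) := by
    apply Continuous.continuousOn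
    rw [hg]
    continuity
  have hmem0 : (0:ℝ) ∈ Set.Ioo (g (q:ℝ)) (g ((q:ℝ)+3)) := by
    constructor
    · show (((q:ℝ) - q) * (((q:ℝ) - q) * ((q:ℝ) + 2) + 1) - 2 * q) < 0
      nlinarith
    · show (0:ℝ) < ((q:ℝ)+3 - q) * (((q:ℝ)+3 - q) * ((q:ℝ)+3 + 2) + 1) - 2 * q
      nlinarith
  obtain ⟨r, hrmem, hgr⟩ :=
    intermediate_value_Ioo (show (q:ℝ) ≤ (q:ℝ)+3 by linarith) hcont hmem0
  have hmono : StrictMonoOn g (Set.Ici (q:ℝ)) := by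
    intro x hx y hy hxy
    simp only [Set.mem_Ici] at hx hy
    have h1 : (0:ℝ) ≤ x - q := by linarith
    have h3 : (0:ℝ) ≤ y - q := by linarith
    have key : g y - g x = (y - x) * ((((x - q)^2 + (x - q)*(y - q) + (y - q)^2))
        + ((q:ℝ)+2)*((x - q)+(y - q)) + 1) := by rw [hg]; ring
    have hbr : (0:ℝ) < (((x - q)^2 + (x - q)*(y - q) + (y - q)^2))
        + ((q:ℝ)+2)*((x - q)+(y - q)) + 1 := by
      have := mul_nonneg h1 h3
      have := sq_nonneg (x - q)
      have := sq_nonneg (y - q)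
      nlinarith
    have := mul_pos (show (0:ℝ) < y - x by linarith) hbr
    linarith [key, this]
  set S : Set ℝ := {x : ℝ | (charP (pathBlock q 3)).IsRoot x} with hS
  have hfin : S.Finite :=
    Polynomial.finite_setOf_isRoot ((Matrix.charpoly_monic _).ne_zero)
  have hrS : r ∈ S := PBaux.backward_dir hq hrmem.1 hgr
  have hsup_mem : sSup S ∈ S := Set.Nonempty.csSup_mem ⟨r, hrS⟩ hfin
  have hler : r ≤ sSup S := le_csSup hfin.bddAbove hrS
  have hqlt : (q:ℝ) < sSup S := lt_of_lt_of_le hrmem.1 hler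
  have hspec : specRad (pathBlock q 3) = sSup S := rfl
  have hfsup : g (sSup S) = 0 := PBaux.forward_dir hq hqlt hsup_mem
  refine ⟨hspec ▸ hqlt, ?_, ?_⟩
  · rw [hspec]
    exact hfsup
  · intro x hx hgx
    rw [hspec]
    exact hmono.injOn (Set.mem_Ici.mpr (le_of_lt hx)) (Set.mem_Ici.mpr (le_of_lt hqlt))
      (hgx.trans hfsup.symm)
end
end

section
/- Let G₁ = G·_u^v H (coalescence identifying u ∈ V(G) with v ∈ V(H)) and G₂ = G·_u^w H. Then P_{G₂}(x) − P_{G₁}(x) = (P_G(x) − x·P_{G−u}(x))·(P_{H−w}(x) − P_{H−v}(x)). -/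
open scoped Classical
open Polynomial

noncomputable section

/-- Vertex-deleted subgraph `G - v`. -/
def del {V : Type*} (G : SimpleGraph V) (v : V) : SimpleGraph {u : V // u ≠ v} :=
  SimpleGraph.induce {u : V | u ≠ v} G

/-- Coalescence of `G` and `H` obtained by identifying `g ∈ V(G)` with `h ∈ V(H)`
(the vertex `Sum.inl g` plays the role of the identified vertex). -/
def coal {V W : Type*} (G : SimpleGraph V) (H : SimpleGraph W) (g : V) (h : W) :
    SimpleGraph (V ⊕ {w : W // w ≠ h}) where
  Adj x y :=
    match x, y with
    | Sum.inl a, Sum.inl b => G.Adj a b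
    | Sum.inl a, Sum.inr b => a = g ∧ H.Adj h b.1
    | Sum.inr a, Sum.inl b => b = g ∧ H.Adj h a.1
    | Sum.inr a, Sum.inr b => H.Adj a.1 b.1
  symm := by
    constructor
    rintro (a | a) (b | b) hxy
    exacts [G.adj_symm hxy, hxy, hxy, H.adj_symm hxy]
  loopless := by
    constructor
    rintro (a | a) hxy
    exacts [G.irrefl hxy, H.irrefl hxy]

namespace CoalAux

open Matrix

variable {K : Type*} [Field K]

section general
variable {n : Type*} [Fintype n] [DecidableEq n]

def vEquiv (g : n) : Unit ⊕ {a : n // a ≠ g} ≃ n where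
  toFun x := Sum.elim (fun _ => g) Subtype.val x
  invFun a := if h : a = g then Sum.inl () else Sum.inr ⟨a, h⟩
  left_inv x := by
    rcases x with _ | a
    · simp
    · simp [a.2]
  right_inv a := by by_cases h : a = g <;> simp [h]

/-- principal minor -/
def pm (M : Matrix n n K) (g : n) : Matrix {a : n // a ≠ g} {a : n // a ≠ g} K :=
  M.submatrix Subtype.val Subtype.val

lemma det_updateRow_single (M : Matrix n n K) (g : n) :
    (M.updateRow g (Pi.single g 1)).det = (pm M g).det := by
  rw [← det_submatrix_equiv_self (vEquiv g)]
  have h : (M.updateRow g (Pi.single g 1)).submatrix (vEquiv g) (vEquiv g)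
      = fromBlocks (Matrix.of fun _ _ => (1 : K)) 0
          (Matrix.of fun (a : {a : n // a ≠ g}) (_ : Unit) => M a.1 g) (pm M g) := by
    ext i j
    rcases i with _ | a <;> rcases j with _ | b
    · simp [vEquiv]
    · simp [vEquiv, Pi.single_apply, Ne.symm b.2]
    · simp [vEquiv, pm, Matrix.updateRow_ne a.2]
    · simp [vEquiv, pm, Matrix.updateRow_ne a.2]
  rw [h, det_fromBlocks_zero₁₂, det_unique]
  simp

lemma det_add_rankOne (M : Matrix n n K) (g : n) (s : K) :
    (M + Matrix.of fun a b => if a = g ∧ b = g then s else 0).det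
      = M.det + s * (pm M g).det := by
  have h : (M + Matrix.of fun a b => if a = g ∧ b = g then s else 0)
      = M.updateRow g (fun b => M g b + s * (Pi.single g 1 : n → K) b) := by
    ext a b
    by_cases h : a = g
    · subst h
      simp [Pi.single_apply, and_comm]
    · simp [Matrix.updateRow_ne h, h]
  have h2 : (fun b => M g b + s * (Pi.single g 1 : n → K) b)
      = M g + s • (Pi.single g 1 : n → K) := by
    funext b; simp
  rw [h, h2, det_updateRow_add, Matrix.updateRow_eq_self, det_updateRow_smul,
    det_updateRow_single]

def schurTerm (M : Matrix n n K) (g : n) : K :=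
  ∑ j, (∑ i, M g i.1 * (pm M g)⁻¹ i j) * M j.1 g

lemma det_eq_schur (M : Matrix n n K) (g : n) (h : IsUnit (pm M g).det) :
    M.det = (pm M g).det * (M g g - schurTerm M g) := by
  haveI : Invertible (pm M g) := (pm M g).invertibleOfIsUnitDet h
  rw [← det_submatrix_equiv_self (vEquiv g) M]
  have hb : M.submatrix (vEquiv g) (vEquiv g)
      = fromBlocks (Matrix.of fun _ _ => M g g)
          (Matrix.of fun (_ : Unit) (j : {a : n // a ≠ g}) => M g j.1)
          (Matrix.of fun (i : {a : n // a ≠ g}) (_ : Unit) => M i.1 g) (pm M g) := by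
    ext i j
    rcases i with _ | a <;> rcases j with _ | b <;> simp [vEquiv, pm]
  rw [hb, det_fromBlocks₂₂]
  congr 1
  rw [det_unique]
  simp [Matrix.mul_apply, schurTerm, invOf_eq_nonsing_inv, Finset.sum_mul]

end general

def N {α : Type*} (G : SimpleGraph α) : Matrix α α (RatFunc ℝ) :=
  fun a b => (if a = b then algebraMap (Polynomial ℝ) (RatFunc ℝ) X else 0)
    - (if G.Adj a b then 1 else 0)

lemma charP_eq {α : Type*} [Fintype α] [DecidableEq α] (G : SimpleGraph α) :
    algebraMap (Polynomial ℝ) (RatFunc ℝ) (charP G) = (N G).det := by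
  rw [_root_.charP, Matrix.charpoly, RingHom.map_det]
  congr 1
  ext i j
  by_cases hij : i = j
  · subst hij
    simp [Matrix.map_apply, charmatrix_apply_eq, N, adjM, map_sub]
  · by_cases hadj : G.Adj i j <;>
      simp [Matrix.map_apply, charmatrix_apply_ne _ _ _ hij, N, adjM, hij, hadj]

lemma pm_N {α : Type*} (H : SimpleGraph α) (h : α) :
    pm (N H) h = N (del H h) := by
  ext a b
  simp [N, del, pm, Subtype.ext_iff, Matrix.submatrix_apply]

lemma detN_ne {α : Type*} [Fintype α] [DecidableEq α] (G : SimpleGraph α) :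
    (N G).det ≠ 0 := by
  rw [← charP_eq]
  exact fun hc => (Matrix.charpoly_monic (adjM G)).ne_zero
    (RatFunc.algebraMap_injective ℝ (by simpa [_root_.charP] using hc))

lemma schwenk {V W : Type*} [Fintype V] [DecidableEq V] [Fintype W] [DecidableEq W]
    (G : SimpleGraph V) (H : SimpleGraph W) (g : V) (h : W) :
    charP (coal G H g h) = charP G * charP (del H h) + charP (del G g) * charP H
      - X * (charP (del G g) * charP (del H h)) := by
  apply RatFunc.algebraMap_injective ℝ
  have hDu : IsUnit (pm (N H) h).det := by
    rw [pm_N]; exact isUnit_iff_ne_zero.2 (detN_ne _)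
  haveI : Invertible (pm (N H) h) := (pm (N H) h).invertibleOfIsUnitDet hDu
  have hblock : N (coal G H g h) = Matrix.fromBlocks (N G)
      (Matrix.of fun a (i : {w : W // w ≠ h}) => if a = g then N H h i.1 else 0)
      (Matrix.of fun (i : {w : W // w ≠ h}) a => if a = g then N H i.1 h else 0)
      (pm (N H) h) := by
    ext i j
    rcases i with a | i <;> rcases j with b | j
    · simp [N, coal]
      congr
    · simp only [N, coal, Matrix.fromBlocks_apply₁₂, Matrix.of_apply]
      by_cases hag : a = g <;> by_cases hadj : H.Adj h j.1 <;>
        simp [hag, hadj, Ne.symm j.2]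
    · simp only [N, coal, Matrix.fromBlocks_apply₂₁, Matrix.of_apply]
      by_cases hag : b = g <;> by_cases hadj : H.Adj h i.1 <;>
        simp [hag, hadj, i.2, SimpleGraph.adj_comm]
    · simp [N, coal, pm, Subtype.ext_iff]
      congr
  have hrank : N G - (Matrix.of fun a (i : {w : W // w ≠ h}) => if a = g then N H h i.1 else 0)
      * ⅟(pm (N H) h) * (Matrix.of fun (i : {w : W // w ≠ h}) a => if a = g then N H i.1 h else 0)
      = N G + Matrix.of fun a b => if a = g ∧ b = g then -(schurTerm (N H) h) else 0 := by
    rw [invOf_eq_nonsing_inv]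
    ext a b
    by_cases hag : a = g <;> by_cases hbg : b = g <;>
      simp [Matrix.mul_apply, hag, hbg, schurTerm, Finset.sum_mul, sub_eq_add_neg]
  have hH := det_eq_schur (N H) h hDu
  have hHh : N H h h = algebraMap (Polynomial ℝ) (RatFunc ℝ) X := by
    simp [N]
  rw [hHh] at hH
  rw [charP_eq, hblock, Matrix.det_fromBlocks₂₂, hrank, det_add_rankOne]
  simp only [_root_.map_sub, _root_.map_add, _root_.map_mul, charP_eq]
  rw [← pm_N (H := H) h, ← pm_N (H := G) g]
  linear_combination (-(pm (N G) g).det) * hH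

end CoalAux

/-- For the two coalescences `G₁ = G·_u^v H` and `G₂ = G·_u^w H`:
`P_{G₂} - P_{G₁} = (P_G - x·P_{G-u}) * (P_{H-w} - P_{H-v})`. -/
theorem coalescence_difference {V W : Type*} [Fintype V] [DecidableEq V]
    [Fintype W] [DecidableEq W] (G : SimpleGraph V) (H : SimpleGraph W)
    (u : V) (v w : W) :
    charP (coal G H u w) - charP (coal G H u v) =
      (charP G - X * charP (del G u)) * (charP (del H w) - charP (del H v)) := by
  rw [CoalAux.schwenk G H u w, CoalAux.schwenk G H u v]
  ring
end
end
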